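/- Let V₁, …, Vₙ ∈ ℝᵈ, w₁, …, wₙ ≥ 0, τ > 0, 𝔖 = (1/n) Σⱼ wⱼ Vⱼ Vⱼᵀ, and 𝔖(i) = 𝔖 − (wᵢ/n) Vᵢ Vᵢᵀ. Then 0 ≤ tr((𝔖(i) + τ Id)⁻¹) − tr((𝔖 + τ Id)⁻¹) ≤ 1/τ. -/

import Mathlib

noncomputable section
open scoped BigOperators
open Matrix

variable {d : ℕ}

lemma vecMulVec_mul_mat (a b : Fin d → ℝ) (N : Matrix (Fin d) (Fin d) ℝ) :
    vecMulVec a b * N = vecMulVec a (b ᵥ* N) := by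
  ext i j
  simp [Matrix.mul_apply, vecMulVec_apply, vecMul, dotProduct, Finset.mul_sum, mul_assoc]

lemma vecMulVec_mul_vecMulVec (a b c e : Fin d → ℝ) :
    vecMulVec a b * vecMulVec c e = (b ⬝ᵥ c) • vecMulVec a e := by
  ext i j
  simp [Matrix.mul_apply, vecMulVec_apply, dotProduct, Finset.sum_mul, Finset.mul_sum]
  ring_nf
  exact Finset.sum_congr rfl fun k _ => by ring

lemma trace_vecMulVec' (a b : Fin d → ℝ) : (vecMulVec a b).trace = a ⬝ᵥ b := by
  simp [Matrix.trace, Matrix.diag, vecMulVec_apply, dotProduct]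

lemma vecMulVec_mulVec' (a b x : Fin d → ℝ) : vecMulVec a b *ᵥ x = (b ⬝ᵥ x) • a := by
  ext i
  simp only [mulVec, vecMulVec_apply, dotProduct, Pi.smul_apply, smul_eq_mul,
    Finset.sum_mul, Finset.mul_sum]
  exact Finset.sum_congr rfl fun k _ => by ring

lemma posSemidef_smul_outer {c : ℝ} (hc : 0 ≤ c) (v : Fin d → ℝ) :
    (c • vecMulVec v v).PosSemidef := by
  refine Matrix.PosSemidef.of_dotProduct_mulVec_nonneg ?_ ?_
  · ext i j
    simp [vecMulVec_apply, mul_comm]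
  · intro x
    rw [smul_mulVec, dotProduct_smul, vecMulVec_mulVec', dotProduct_smul]
    have : star x ⬝ᵥ v = v ⬝ᵥ x := by simp [dotProduct, mul_comm]
    rw [this, smul_eq_mul]
    exact mul_nonneg hc (mul_self_nonneg _)

lemma posDef_smul_one {τ : ℝ} (hτ : 0 < τ) :
    (τ • (1 : Matrix (Fin d) (Fin d) ℝ)).PosDef := by
  refine Matrix.PosDef.of_dotProduct_mulVec_pos ?_ ?_
  · ext i j
    simp [Matrix.one_apply, eq_comm]
  · intro x hx
    rw [smul_mulVec, dotProduct_smul, one_mulVec]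
    have h : star x ⬝ᵥ x = ∑ i, x i ^ 2 := by simp [dotProduct, sq]
    have h2 : 0 < ∑ i, x i ^ 2 := by
      rcases Function.ne_iff.mp hx with ⟨i, hi⟩
      have hi' : x i ≠ 0 := by simpa using hi
      exact Finset.sum_pos' (fun j _ => sq_nonneg _)
        ⟨i, Finset.mem_univ i, by positivity⟩
    rw [smul_eq_mul, h]
    positivity

lemma posSemidef_sum' {ι : Type*} (s : Finset ι) (c : ι → ℝ) (v : ι → Fin d → ℝ)
    (hc : ∀ j ∈ s, 0 ≤ c j) :
    (∑ j ∈ s, c j • vecMulVec (v j) (v j)).PosSemidef := by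
  classical
  induction s using Finset.induction with
  | empty => simpa using Matrix.PosSemidef.zero
  | @insert j s hj ih =>
    rw [Finset.sum_insert hj]
    exact (posSemidef_smul_outer (hc _ (Finset.mem_insert_self _ _)) _).add
      (ih fun j hjs => hc j (Finset.mem_insert_of_mem hjs))

lemma main_aux (T : Matrix (Fin d) (Fin d) ℝ) (hpsd : T.PosSemidef)
    (τ : ℝ) (hτ : 0 < τ) (c : ℝ) (hc : 0 ≤ c) (v : Fin d → ℝ) :
    0 ≤ Matrix.trace ((T + τ • (1 : Matrix (Fin d) (Fin d) ℝ))⁻¹) -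
        Matrix.trace ((T + c • vecMulVec v v + τ • (1 : Matrix (Fin d) (Fin d) ℝ))⁻¹) ∧
    Matrix.trace ((T + τ • (1 : Matrix (Fin d) (Fin d) ℝ))⁻¹) -
        Matrix.trace ((T + c • vecMulVec v v + τ • (1 : Matrix (Fin d) (Fin d) ℝ))⁻¹) ≤ 1 / τ := by
  classical
  set A := T + τ • (1 : Matrix (Fin d) (Fin d) ℝ) with hA_def
  set Mi := vecMulVec v v with hMi_def
  have hB : T + c • Mi + τ • (1 : Matrix (Fin d) (Fin d) ℝ) = A + c • Mi := by
    rw [hA_def]; abel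
  have hA : A.PosDef := Matrix.PosDef.posSemidef_add hpsd (posDef_smul_one hτ)
  have hdet : IsUnit A.det := (Matrix.isUnit_iff_isUnit_det A).mp hA.isUnit
  have hA1 : A * A⁻¹ = 1 := Matrix.mul_nonsing_inv _ hdet
  set u := A⁻¹ *ᵥ v with hu_def
  set q := v ⬝ᵥ u with hq_def
  set r := u ⬝ᵥ u with hr_def
  have hr : 0 ≤ r := by
    rw [hr_def]
    exact Finset.sum_nonneg fun j _ => mul_self_nonneg _
  have hAu : A *ᵥ u = v := by
    rw [hu_def, Matrix.mulVec_mulVec, hA1, Matrix.one_mulVec]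
  have hTq : 0 ≤ u ⬝ᵥ T *ᵥ u := by simpa using hpsd.dotProduct_mulVec_nonneg u
  have hq_ge : τ * r ≤ q := by
    have : q = u ⬝ᵥ T *ᵥ u + τ * r := by
      rw [hq_def, ← hAu, dotProduct_comm, hA_def, Matrix.add_mulVec,
        dotProduct_add, smul_mulVec, Matrix.one_mulVec, dotProduct_smul,
        smul_eq_mul, hr_def]
    linarith
  have hq0 : 0 ≤ q := le_trans (mul_nonneg hτ.le hr) hq_ge
  set α := 1 + c * q with hα_def
  have hα : 0 < α := by
    rw [hα_def]
    have := mul_nonneg hc hq0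
    linarith
  -- symmetry of A⁻¹
  have hsym : (A⁻¹)ᵀ = A⁻¹ := by
    have h := hA.inv.isHermitian
    ext a b
    have := congrFun (congrFun h a) b
    simpa [Matrix.conjTranspose_apply] using this
  have hvec : v ᵥ* A⁻¹ = u := by
    conv_lhs => rw [← hsym]
    rw [Matrix.vecMul_transpose, hu_def]
  have hvec' : u ᵥ* A⁻¹ = A⁻¹ *ᵥ u := by
    conv_lhs => rw [← hsym]
    rw [Matrix.vecMul_transpose]
  set X := Mi * A⁻¹ with hX_def
  have hMA : X = vecMulVec v u := by rw [hX_def, hMi_def, vecMulVec_mul_mat, hvec]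
  have hMAM : X * Mi = q • Mi := by
    rw [hMA, hMi_def, _root_.vecMulVec_mul_vecMulVec, dotProduct_comm, ← hq_def]
  have key : (A + c • Mi) * (A⁻¹ - (c / α) • (A⁻¹ * X)) = 1 := by
    have h1 : A * ((c / α) • (A⁻¹ * X)) = (c / α) • X := by
      rw [Matrix.mul_smul, ← Matrix.mul_assoc, hA1, Matrix.one_mul]
    have h2 : (c • Mi) * A⁻¹ = c • X := by rw [Matrix.smul_mul, hX_def]
    have h3 : (c • Mi) * ((c / α) • (A⁻¹ * X)) = (c * (c / α) * q) • X := by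
      have hMAM' : Mi * A⁻¹ * Mi = q • Mi := by rw [hX_def] at hMAM; exact hMAM
      have hXX : Mi * (A⁻¹ * X) = q • X := by
        rw [hX_def, ← Matrix.mul_assoc, ← Matrix.mul_assoc, hMAM', Matrix.smul_mul]
      rw [Matrix.smul_mul, Matrix.mul_smul, smul_smul, hXX, smul_smul]
    rw [Matrix.add_mul, Matrix.mul_sub, Matrix.mul_sub, h1, h2, h3, hA1]
    have step : (1 : Matrix (Fin d) (Fin d) ℝ) - (c / α) • X + (c • X - (c * (c / α) * q) • X)
        = 1 + (c - c / α - c * (c / α) * q) • X := by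
      rw [sub_smul, sub_smul]; abel
    have hcoeff : c - c / α - c * (c / α) * q = 0 := by
      field_simp
      ring
    rw [step, hcoeff, zero_smul, add_zero]
  have hBinv : (A + c • Mi)⁻¹ = A⁻¹ - (c / α) • (A⁻¹ * X) := Matrix.inv_eq_right_inv key
  have htr : Matrix.trace (A⁻¹ * X) = r := by
    rw [hMA, Matrix.trace_mul_comm, vecMulVec_mul_mat, trace_vecMulVec', hvec',
      Matrix.dotProduct_mulVec, hvec, hr_def]
  have hdiff : Matrix.trace (A⁻¹) - Matrix.trace ((A + c • Mi)⁻¹) = (c / α) * r := by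
    rw [hBinv, Matrix.trace_sub, Matrix.trace_smul, smul_eq_mul, htr]
    ring
  rw [hB, hdiff]
  constructor
  · exact mul_nonneg (div_nonneg hc hα.le) hr
  · rw [div_mul_eq_mul_div, div_le_div_iff₀ hα hτ]
    nlinarith [mul_le_mul_of_nonneg_left hq_ge hc]

theorem statement11 {n d : ℕ} (V : Fin n → Fin d → ℝ) (w : Fin n → ℝ)
    (hw : ∀ i, 0 ≤ w i) (τ : ℝ) (hτ : 0 < τ)
    (S : Matrix (Fin d) (Fin d) ℝ)
    (hS : S = (1 / (n : ℝ)) • ∑ j, w j • Matrix.vecMulVec (V j) (V j))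
    (Si : Fin n → Matrix (Fin d) (Fin d) ℝ)
    (hSi : ∀ i, Si i = S - (w i / (n : ℝ)) • Matrix.vecMulVec (V i) (V i)) :
    ∀ i,
      0 ≤ Matrix.trace ((Si i + τ • (1 : Matrix (Fin d) (Fin d) ℝ))⁻¹) -
          Matrix.trace ((S + τ • (1 : Matrix (Fin d) (Fin d) ℝ))⁻¹) ∧
      Matrix.trace ((Si i + τ • (1 : Matrix (Fin d) (Fin d) ℝ))⁻¹) -
          Matrix.trace ((S + τ • (1 : Matrix (Fin d) (Fin d) ℝ))⁻¹) ≤ 1 / τ := by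
  intro i
  classical
  have h1 : S = ∑ j, (1 / (n : ℝ) * w j) • Matrix.vecMulVec (V j) (V j) := by
    rw [hS, Finset.smul_sum]
    simp_rw [smul_smul]
  have h2 : (w i / (n : ℝ)) • Matrix.vecMulVec (V i) (V i)
      = ∑ j, (if j = i then (w j / (n : ℝ)) • Matrix.vecMulVec (V j) (V j) else 0) := by
    rw [Finset.sum_ite_eq' Finset.univ i]
    simp
  have hSi' : Si i = ∑ j, (if j = i then 0 else w j / (n : ℝ)) • Matrix.vecMulVec (V j) (V j) := by
    rw [hSi i, h1, h2, ← Finset.sum_sub_distrib]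
    refine Finset.sum_congr rfl fun j _ => ?_
    by_cases h : j = i
    · subst h
      rw [if_pos rfl, if_pos rfl, zero_smul, sub_eq_zero]
      congr 1
      ring
    · rw [if_neg h, if_neg h, sub_zero]
      congr 1
      ring
  have hpsd : (Si i).PosSemidef := by
    rw [hSi']
    refine posSemidef_sum' _ _ _ fun j _ => ?_
    by_cases h : j = i
    · simp [h]
    · rw [if_neg h]
      exact div_nonneg (hw j) (Nat.cast_nonneg n)
  have hSeq : S + τ • (1 : Matrix (Fin d) (Fin d) ℝ)
      = Si i + (w i / (n : ℝ)) • Matrix.vecMulVec (V i) (V i) + τ • 1 := by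
    rw [hSi i]
    abel
  rw [hSeq]
  exact main_aux (Si i) hpsd τ hτ _ (div_nonneg (hw i) (Nat.cast_nonneg n)) (V i)
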